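/- For any d×d density matrix ρ (d ≥ 2), the trace-norm mixedness M_tr(ρ) = 1 − (d/(2(d−1))) ‖ρ − (1/d)I_d‖_tr satisfies 0 ≤ M_tr(ρ) ≤ 1, and M_tr(ρ) = 0 whenever ρ is a pure state. -/

import Mathlib

open Matrix
open scoped ComplexOrder

/-- The trace norm of a matrix `A`: `‖A‖_tr = Tr √(AᴴA)`. -/
noncomputable def traceNorm {d : ℕ} (A : Matrix (Fin d) (Fin d) ℂ) : ℝ :=
  (((Matrix.posSemidef_conjTranspose_mul_self A).1.eigenvectorUnitary.1 *
      diagonal (fun i => ((√((Matrix.posSemidef_conjTranspose_mul_self A).1.eigenvalues i) : ℝ) : ℂ)) *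
      (star (Matrix.posSemidef_conjTranspose_mul_self A).1.eigenvectorUnitary :
        Matrix (Fin d) (Fin d) ℂ)).trace).re

open scoped MatrixOrder in
lemma traceNorm_eq_of_sq {d : ℕ} {A B : Matrix (Fin d) (Fin d) ℂ} (hB : B.PosSemidef)
    (h : B ^ 2 = Aᴴ * A) : traceNorm A = B.trace.re := by
  have hH := (posSemidef_conjTranspose_mul_self A).1
  have e : hH.eigenvectorUnitary.1 * diagonal (fun i => ((√(hH.eigenvalues i) : ℝ) : ℂ)) *
      (star hH.eigenvectorUnitary : Matrix (Fin d) (Fin d) ℂ) = cfc Real.sqrt (Aᴴ * A) := by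
    rw [hH.cfc_eq]; rfl
  have e2 : cfc Real.sqrt (Aᴴ * A) = B := by
    rw [← cfcₙ_eq_cfc (hf0 := by simp),
      ← CFC.sqrt_eq_real_sqrt _ (posSemidef_conjTranspose_mul_self A).nonneg]
    exact CFC.sqrt_unique (by rw [← h, sq]) hB.nonneg
  unfold traceNorm
  rw [e, e2]

lemma psd_real_smul {d : ℕ} {ρ : Matrix (Fin d) (Fin d) ℂ} (hρ : ρ.PosSemidef)
    {r : ℝ} (hr : 0 ≤ r) : (((r : ℂ)) • ρ).PosSemidef := by
  exact hρ.smul (Complex.zero_le_real.mpr hr)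

lemma traceNorm_eig {d : ℕ} (ρ : Matrix (Fin d) (Fin d) ℂ) (hρ : ρ.IsHermitian) (c : ℝ) :
    traceNorm (ρ - c • 1) = ∑ i, |hρ.eigenvalues i - c| := by
  set U : Matrix (Fin d) (Fin d) ℂ := (hρ.eigenvectorUnitary : Matrix (Fin d) (Fin d) ℂ) with hU
  have hUU : star U * U = 1 := mem_unitaryGroup_iff'.mp hρ.eigenvectorUnitary.2
  have hUU' : U * star U = 1 := mem_unitaryGroup_iff.mp hρ.eigenvectorUnitary.2
  have key : ∀ (g h : Fin d → ℂ), (U * diagonal g * star U) * (U * diagonal h * star U)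
      = U * diagonal (fun i => g i * h i) * star U := by
    intro g h
    have h1 : diagonal g * (star U * U) * diagonal h = diagonal fun i => g i * h i := by
      rw [hUU, mul_one, diagonal_mul_diagonal]
    calc U * diagonal g * star U * (U * diagonal h * star U)
        = U * (diagonal g * (star U * U) * diagonal h) * star U := by
          simp only [mul_assoc]
      _ = _ := by rw [h1]
  set f : Fin d → ℝ := fun i => hρ.eigenvalues i - c with hf
  have hA : ρ - c • 1 = U * diagonal (fun i => (f i : ℂ)) * star U := by
    have h1 : (c • (1 : Matrix (Fin d) (Fin d) ℂ)) = U * diagonal (fun _ => (c : ℂ)) * star U := by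
      have e1 : diagonal (fun _ : Fin d => (c : ℂ)) = (c : ℂ) • 1 := by
        ext i j
        by_cases h : i = j <;> simp [h, Matrix.one_apply]
      rw [e1, Matrix.mul_smul, Matrix.mul_one, Matrix.smul_mul, hUU']
      ext i j
      simp [Matrix.smul_apply, Complex.real_smul]
    have hdiag : diagonal (RCLike.ofReal ∘ hρ.eigenvalues) - diagonal (fun _ : Fin d => (c : ℂ))
        = diagonal fun i => (f i : ℂ) := by
      ext i j
      by_cases h : i = j <;> simp [h, hf]
    conv_lhs => rw [hρ.spectral_theorem, Unitary.conjStarAlgAut_apply, h1]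
    rw [← hU, ← Matrix.sub_mul, ← Matrix.mul_sub, hdiag]
  have hstarD : star (diagonal fun i => (f i : ℂ)) = diagonal fun i => (f i : ℂ) := by
    have e0 : (star fun i => ((f i : ℂ))) = fun i => ((f i : ℂ)) := by
      funext i
      simp [Complex.conj_ofReal]
    rw [star_eq_conjTranspose, diagonal_conjTranspose, e0]
  have hAH : (ρ - c • 1)ᴴ * (ρ - c • 1) = U * diagonal (fun i => ((f i : ℂ))^2) * star U := by
    rw [hA]
    have e2 : (U * diagonal (fun i => (f i : ℂ)) * star U)ᴴ
        = U * diagonal (fun i => (f i : ℂ)) * star U := by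
      rw [← star_eq_conjTranspose]
      simp only [StarMul.star_mul, star_star, hstarD, mul_assoc]
    rw [e2, key]
    congr 1
    congr 1
    funext i
    ring
  have hBpsd : (U * diagonal (fun i => ((|f i| : ℝ) : ℂ)) * star U).PosSemidef := by
    rw [star_eq_conjTranspose]
    exact PosSemidef.mul_mul_conjTranspose_same
      (posSemidef_diagonal_iff.mpr fun i => Complex.zero_le_real.mpr (abs_nonneg (f i))) U
  have hB2 : (U * diagonal (fun i => ((|f i| : ℝ) : ℂ)) * star U) ^ 2 = (ρ - c • 1)ᴴ * (ρ - c • 1) := by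
    rw [pow_two, key, hAH]
    have e3 : (fun i => ((|f i| : ℝ) : ℂ) * ((|f i| : ℝ) : ℂ)) = fun i => ((f i : ℂ))^2 := by
      funext i
      rw [← Complex.ofReal_mul, abs_mul_abs_self]
      push_cast
      ring
    rw [e3]
  have hsqrt : traceNorm (ρ - c • 1)
      = (U * diagonal (fun i => ((|f i| : ℝ) : ℂ)) * star U).trace.re :=
    traceNorm_eq_of_sq hBpsd hB2
  have htr : (U * diagonal (fun i => ((|f i| : ℝ) : ℂ)) * star U).trace = ((∑ i, |f i| : ℝ) : ℂ) := by
    rw [trace_mul_cycle, hUU, one_mul, trace_diagonal]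
    push_cast
    rfl
  rw [hsqrt, htr, Complex.ofReal_re]

lemma sum_abs_eig_bound {d : ℕ} (hd : 2 ≤ d) (lam : Fin d → ℝ) (h0 : ∀ i, 0 ≤ lam i)
    (h1 : ∑ i, lam i = 1) : ∑ i, |lam i - (d : ℝ)⁻¹| ≤ 2 * ((d : ℝ) - 1) / d := by
  have hdpos : (0 : ℝ) < d := by
    have : (0:ℕ) < d := by omega
    exact_mod_cast this
  have hdne : (d : ℝ) ≠ 0 := ne_of_gt hdpos
  obtain ⟨j, hj⟩ : ∃ j, (d : ℝ)⁻¹ ≤ lam j := by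
    by_contra h
    push_neg at h
    have hne : (Finset.univ : Finset (Fin d)).Nonempty :=
      ⟨⟨0, by omega⟩, Finset.mem_univ _⟩
    have hlt : ∑ i, lam i < ∑ _i : Fin d, (d : ℝ)⁻¹ :=
      Finset.sum_lt_sum_of_nonempty hne (fun i _ => h i)
    rw [h1, Finset.sum_const, Finset.card_univ, Fintype.card_fin, nsmul_eq_mul,
      mul_inv_cancel₀ hdne] at hlt
    exact lt_irrefl _ hlt
  have hmin : (d : ℝ)⁻¹ ≤ ∑ i, min (lam i) (d : ℝ)⁻¹ := by
    have h2 := Finset.single_le_sum (f := fun i => min (lam i) (d : ℝ)⁻¹)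
      (fun i _ => le_min (h0 i) (by positivity)) (Finset.mem_univ j)
    rwa [min_eq_right hj] at h2
  have habs : ∀ i, |lam i - (d : ℝ)⁻¹| = lam i + (d : ℝ)⁻¹ - 2 * min (lam i) (d : ℝ)⁻¹ := by
    intro i
    rcases le_total (lam i) ((d : ℝ)⁻¹) with h | h
    · rw [abs_of_nonpos (by linarith), min_eq_left h]; ring
    · rw [abs_of_nonneg (by linarith), min_eq_right h]; ring
  have hsum : ∑ i, |lam i - (d : ℝ)⁻¹|
      = 2 - 2 * ∑ i, min (lam i) (d : ℝ)⁻¹ := by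
    rw [Finset.sum_congr rfl (fun i _ => habs i), Finset.sum_sub_distrib,
      Finset.sum_add_distrib, h1, Finset.sum_const, Finset.card_univ, Fintype.card_fin,
      nsmul_eq_mul, mul_inv_cancel₀ hdne, ← Finset.mul_sum]
    ring
  rw [hsum]
  have : 2 * ((d : ℝ) - 1) / d = 2 - 2 * (d : ℝ)⁻¹ := by
    field_simp
  rw [this]
  linarith

/-- For any `d×d` density matrix `ρ` (`d ≥ 2`), the trace-norm mixedness
`M_tr(ρ) = 1 − (d/(2(d−1))) ‖ρ − (1/d)I_d‖_tr` satisfies `0 ≤ M_tr(ρ) ≤ 1`,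
and `M_tr(ρ) = 0` whenever `ρ` is a pure state (a rank-one projection). -/
theorem traceNorm_mixedness_bounds {d : ℕ} (hd : 2 ≤ d)
    (ρ : Matrix (Fin d) (Fin d) ℂ) (hρ : ρ.PosSemidef) (hρtr : ρ.trace = 1) :
    0 ≤ 1 - ((d : ℝ) / (2 * ((d : ℝ) - 1))) * traceNorm (ρ - ((d : ℝ)⁻¹) • 1) ∧
    1 - ((d : ℝ) / (2 * ((d : ℝ) - 1))) * traceNorm (ρ - ((d : ℝ)⁻¹) • 1) ≤ 1 ∧
    (ρ * ρ = ρ → ρ.rank = 1 →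
      1 - ((d : ℝ) / (2 * ((d : ℝ) - 1))) * traceNorm (ρ - ((d : ℝ)⁻¹) • 1) = 0) := by
  have hdpos : (0 : ℝ) < d := by
    have : (0:ℕ) < d := by omega
    exact_mod_cast this
  have hdne : (d : ℝ) ≠ 0 := ne_of_gt hdpos
  have hd1 : (1 : ℝ) ≤ (d : ℝ) - 1 := by
    have : (2:ℝ) ≤ d := by exact_mod_cast hd
    linarith
  have hd1ne : (d : ℝ) - 1 ≠ 0 := by linarith
  have hcpos : 0 < (d : ℝ) / (2 * ((d : ℝ) - 1)) := by positivity
  -- eigenvalues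
  set lam := hρ.1.eigenvalues with hlam
  have hT : traceNorm (ρ - ((d : ℝ)⁻¹) • 1) = ∑ i, |lam i - (d : ℝ)⁻¹| :=
    traceNorm_eig ρ hρ.1 ((d : ℝ)⁻¹)
  have hTnn : 0 ≤ traceNorm (ρ - ((d : ℝ)⁻¹) • 1) := by
    rw [hT]
    exact Finset.sum_nonneg fun i _ => abs_nonneg _
  have hlsum : ∑ i, lam i = 1 := by
    have htr : ρ.trace = ((∑ i, lam i : ℝ) : ℂ) := by
      conv_lhs => rw [hρ.1.spectral_theorem, Unitary.conjStarAlgAut_apply]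
      rw [trace_mul_cycle, mem_unitaryGroup_iff'.mp hρ.1.eigenvectorUnitary.2, one_mul,
        trace_diagonal]
      push_cast
      rfl
    rw [hρtr] at htr
    exact_mod_cast htr.symm
  have hTle : traceNorm (ρ - ((d : ℝ)⁻¹) • 1) ≤ 2 * ((d : ℝ) - 1) / d := by
    rw [hT]
    exact sum_abs_eig_bound hd lam (fun i => hρ.eigenvalues_nonneg i) hlsum
  refine ⟨?_, ?_, ?_⟩
  · have hkey : (d : ℝ) / (2 * ((d : ℝ) - 1)) * (2 * ((d : ℝ) - 1) / d) = 1 := by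
      field_simp
    have := mul_le_mul_of_nonneg_left hTle (le_of_lt hcpos)
    rw [hkey] at this
    linarith
  · nlinarith [mul_nonneg (le_of_lt hcpos) hTnn]
  · intro hpure _hrank
    -- direct computation of the square root in the pure case
    set c : ℂ := (d : ℂ)⁻¹ with hc
    have hsm : ((d : ℝ)⁻¹) • (1 : Matrix (Fin d) (Fin d) ℂ) = c • 1 := by
      ext i j
      simp [hc, Matrix.smul_apply, Complex.real_smul]
    set A : Matrix (Fin d) (Fin d) ℂ := ρ - ((d : ℝ)⁻¹) • 1 with hAdef
    have hAH : Aᴴ = A := by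
      rw [hAdef, conjTranspose_sub, hρ.1, conjTranspose_smul, conjTranspose_one]
      congr 1
    set B : Matrix (Fin d) (Fin d) ℂ := (1 - 2 * c) • ρ + c • 1 with hBdef
    have hc1 : (1 : ℂ) - 2 * c = (((1 - 2 / (d : ℝ)) : ℝ) : ℂ) := by
      rw [hc]
      push_cast
      ring
    have hc2 : c = ((((d : ℝ)⁻¹) : ℝ) : ℂ) := by
      rw [hc]
      push_cast
      ring
    have hBpsd : B.PosSemidef := by
      rw [hBdef, hc1, hc2]
      refine Matrix.PosSemidef.add (psd_real_smul hρ ?_) (psd_real_smul Matrix.PosSemidef.one ?_)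
      · rw [sub_nonneg, div_le_one hdpos]
        exact_mod_cast hd
      · positivity
    have hB2 : B ^ 2 = Aᴴ * A := by
      rw [hAH, pow_two, hBdef, hAdef, hsm]
      simp only [Matrix.add_mul, Matrix.mul_add, Matrix.sub_mul, Matrix.mul_sub,
        Matrix.smul_mul, Matrix.mul_smul, smul_smul, Matrix.mul_one, Matrix.one_mul, hpure]
      have hcd : c * c = c * c := rfl
      match_scalars <;> ring_nf
    have hsqrt : traceNorm A = B.trace.re :=
      traceNorm_eq_of_sq hBpsd hB2
    have hcd : c * (d : ℂ) = 1 := by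
      rw [hc]
      exact inv_mul_cancel₀ (by exact_mod_cast hdne)
    have hdC : (d : ℂ) ≠ 0 := by exact_mod_cast hdne
    have htrB : B.trace = (((2 - 2 * (d : ℝ)⁻¹) : ℝ) : ℂ) := by
      rw [hBdef, trace_add, trace_smul, trace_smul, hρtr, trace_one]
      simp only [Fintype.card_fin, smul_eq_mul, mul_one, hc]
      push_cast
      field_simp
      ring
    have hTval : traceNorm A = 2 - 2 * (d : ℝ)⁻¹ := by
      rw [hsqrt, htrB, Complex.ofReal_re]
    rw [hTval]
    field_simp
    ring
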